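/- Consider a Markov chain x_{n+1} = z_n + w_{n+1}, where given x_n = x, the post-execution value z_n satisfies |z_n| ≤ |x| almost surely, and on an event A(x) of probability at least p★ (when |x| ≥ x★ > γ̄) additionally |z_n| ≤ (1 − λ★)|x| + λ★γ̄; w_{n+1} is independent of (x_n, z_n) with M(α) = E[exp(α|w_{n+1}|)] < ∞. Then for V(x) = exp(α|x|) and all x with |x| ≥ x★: E[V(x_{n+1}) | x_n = x] ≤ M(α)·((1 − p★) + p★·exp(αλ★(γ̄ − |x|)))·V(x). -/

import Mathlib

open MeasureTheory ProbabilityTheory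

/-- One-step Foster–Lyapunov bound outside the large-error threshold: the expected
Lyapunov function after one block is bounded by the mixture rate times `V(x)`. -/
theorem drift_bound_outside {Ω : Type*} [MeasurableSpace Ω] (μ : Measure Ω)
    [IsProbabilityMeasure μ] (z w : Ω → ℝ) (A : Set Ω)
    (x γbar xstar lamstar pstar α : ℝ)
    (hγ : 0 ≤ γbar) (hxs : γbar < xstar) (hlam : lamstar ∈ Set.Ioc (0:ℝ) 1)
    (hp : pstar ∈ Set.Ioc (0:ℝ) 1) (hα : 0 < α)
    (hz : Measurable z) (hw : Measurable w) (hA : MeasurableSet A)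
    (hM : Integrable (fun ω => Real.exp (α * |w ω|)) μ)
    (hind : IndepFun (fun ω => (z ω, A.indicator (fun _ => (1:ℝ)) ω)) w μ)
    (hPA : ENNReal.ofReal pstar ≤ μ A)
    (hmono : ∀ᵐ ω ∂μ, |z ω| ≤ |x|)
    (hgood : ∀ᵐ ω ∂μ, ω ∈ A → |z ω| ≤ (1 - lamstar) * |x| + lamstar * γbar)
    (hx : xstar ≤ |x|) :
    ∫ ω, Real.exp (α * |z ω + w ω|) ∂μ ≤
      (∫ ω, Real.exp (α * |w ω|) ∂μ) *
        ((1 - pstar) + pstar * Real.exp (α * lamstar * (γbar - |x|))) *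
        Real.exp (α * |x|) := by
  set c1 : ℝ := Real.exp (α * ((1 - lamstar) * |x| + lamstar * γbar)) with hc1
  set c2 : ℝ := Real.exp (α * |x|) with hc2
  set ind : Ω → ℝ := A.indicator (fun _ => (1:ℝ)) with hind'
  set f : Ω → ℝ := fun ω => ind ω * (c1 - c2) + c2 with hf
  set g : Ω → ℝ := fun ω => Real.exp (α * |w ω|) with hg
  have hglex : γbar - |x| < 0 := by linarith
  have hc12 : c1 ≤ c2 := by
    apply Real.exp_le_exp.2
    have : (1 - lamstar) * |x| + lamstar * γbar ≤ |x| := by nlinarith [hlam.1, hlam.2]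
    nlinarith
  have hc1pos : 0 < c1 := Real.exp_pos _
  have hc2pos : 0 < c2 := Real.exp_pos _
  -- measurability of f
  have hindmeas : Measurable ind := (measurable_const.indicator hA)
  have hfmeas : Measurable f := by
    exact (hindmeas.mul_const _).add_const _
  have hgmeas : Measurable g := (hw.abs.const_mul α).exp
  -- pointwise bound for f
  have hfb : ∀ᵐ ω ∂μ, Real.exp (α * |z ω|) ≤ f ω := by
    filter_upwards [hmono, hgood] with ω h1 h2
    by_cases hmem : ω ∈ A
    · have : ind ω = 1 := Set.indicator_of_mem hmem _
      simp only [hf, this, one_mul]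
      have : Real.exp (α * |z ω|) ≤ c1 :=
        Real.exp_le_exp.2 (by nlinarith [h2 hmem])
      linarith
    · have : ind ω = 0 := Set.indicator_of_notMem hmem _
      simp only [hf, this, zero_mul, zero_add]
      exact Real.exp_le_exp.2 (by nlinarith)
  -- pointwise bound for the integrand
  have hpt : ∀ᵐ ω ∂μ, Real.exp (α * |z ω + w ω|) ≤ f ω * g ω := by
    filter_upwards [hfb] with ω h1
    have htri : |z ω + w ω| ≤ |z ω| + |w ω| := abs_add_le _ _
    calc Real.exp (α * |z ω + w ω|)
        ≤ Real.exp (α * (|z ω| + |w ω|)) := Real.exp_le_exp.2 (by nlinarith)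
      _ = Real.exp (α * |z ω|) * g ω := by rw [mul_add, Real.exp_add]
      _ ≤ f ω * g ω := by
          have : (0:ℝ) ≤ g ω := (Real.exp_pos _).le
          nlinarith
  -- integrability
  have hfbdd : ∀ ω, |f ω| ≤ c2 + c2 := by
    intro ω
    have hiv : ind ω = 0 ∨ ind ω = 1 := Set.indicator_eq_zero_or_self .. |>.imp id (fun h => h)
    rcases hiv with h | h <;> simp only [hf, h] <;>
      rw [abs_of_nonneg (by nlinarith)] <;> nlinarith
  have hfgint : Integrable (fun ω => f ω * g ω) μ :=
    hM.bdd_mul hfmeas.aestronglyMeasurable (c := c2 + c2) (Filter.Eventually.of_forall fun ω => by rw [Real.norm_eq_abs]; exact hfbdd ω)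
  have hlhsint : Integrable (fun ω => Real.exp (α * |z ω + w ω|)) μ := by
    refine Integrable.mono' hfgint ((hz.add hw).abs.const_mul α).exp.aestronglyMeasurable ?_
    filter_upwards [hpt] with ω h
    rwa [Real.norm_eq_abs, abs_of_nonneg (Real.exp_pos _).le]
  -- independence & factorization
  have hindep : IndepFun f g μ := by
    have hφ : Measurable (fun p : ℝ × ℝ => p.2 * (c1 - c2) + c2) :=
      (measurable_snd.mul_const _).add_const _
    have hψ : Measurable (fun t : ℝ => Real.exp (α * |t|)) :=
      (measurable_id.abs.const_mul α).exp
    exact hind.comp hφ hψ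
  have hfint : Integrable f μ := by
    have : Integrable ind μ := by
      simpa [hind'] using (integrable_const (1:ℝ)).indicator hA
    exact (this.mul_const _).add (integrable_const c2)
  have hfactor : ∫ ω, f ω * g ω ∂μ = (∫ ω, f ω ∂μ) * ∫ ω, g ω ∂μ :=
    hindep.integral_mul_eq_mul_integral hfint.aestronglyMeasurable hM.aestronglyMeasurable
  -- compute ∫ f
  have hindint : ∫ ω, ind ω ∂μ = (μ A).toReal := by
    simp [hind', integral_indicator_const, hA, measureReal_def]
  have hfival : ∫ ω, f ω ∂μ = (μ A).toReal * (c1 - c2) + c2 := by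
    rw [hf]
    rw [integral_add ((by simpa [hind'] using (integrable_const (1:ℝ)).indicator hA : Integrable ind μ).mul_const _) (integrable_const c2)]
    rw [integral_mul_const, hindint, integral_const]
    simp
  -- bound on ∫ f
  have hμA1 : (μ A).toReal ≤ 1 := by
    have := prob_le_one (μ := μ) (s := A)
    simpa using ENNReal.toReal_mono (by simp) this
  have hpA : pstar ≤ (μ A).toReal := by
    have := ENNReal.toReal_mono (by simp [measure_ne_top]) hPA
    simpa [ENNReal.toReal_ofReal hp.1.le] using this
  have hfbound : ∫ ω, f ω ∂μ ≤
      ((1 - pstar) + pstar * Real.exp (α * lamstar * (γbar - |x|))) * c2 := by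
    rw [hfival]
    have key : c1 = Real.exp (α * lamstar * (γbar - |x|)) * c2 := by
      rw [hc1, hc2, ← Real.exp_add]; ring_nf
    rw [key]
    nlinarith [Real.exp_pos (α * lamstar * (γbar - |x|)), hpA, hμA1, hc2pos,
      mul_le_mul_of_nonneg_right hpA hc2pos.le]
  -- finish
  have hMnn : 0 ≤ ∫ ω, g ω ∂μ := integral_nonneg fun ω => (Real.exp_pos _).le
  calc ∫ ω, Real.exp (α * |z ω + w ω|) ∂μ
      ≤ ∫ ω, f ω * g ω ∂μ := integral_mono_ae hlhsint hfgint hpt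
    _ = (∫ ω, f ω ∂μ) * ∫ ω, g ω ∂μ := hfactor
    _ ≤ (((1 - pstar) + pstar * Real.exp (α * lamstar * (γbar - |x|))) * c2) * ∫ ω, g ω ∂μ :=
        mul_le_mul_of_nonneg_right hfbound hMnn
    _ = (∫ ω, Real.exp (α * |w ω|) ∂μ) *
        ((1 - pstar) + pstar * Real.exp (α * lamstar * (γbar - |x|))) * c2 := by
        simp only [hg]; ring
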